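/- Let U : [0,∞) → ℝ be continuous with lim_{ξ→∞} U(ξ)/log ξ = +∞, let σ > 0, α ∈ ℝ, p > 1, and let G : [0,∞) → ℝ be continuous with G(0) = 0. Then the function t ↦ ((2/(p-1)) - α)·log t - max_{[0,t]} G + (1/p)·min_{[σt,(2+σ)t]} U - max_{[σt,(2+σ)t]} U is bounded above on (1,∞); in particular it does not tend to +∞. -/

import Mathlib

open Filter Set

set_option maxHeartbeats 1000000

theorem stmt_8 (U : ℝ → ℝ) (hU : ContinuousOn U (Ici 0))
    (hlim : Tendsto (fun ξ => U ξ / Real.log ξ) atTop atTop)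
    (G : ℝ → ℝ) (hG : ContinuousOn G (Ici 0)) (hG0 : G 0 = 0)
    (σ α p : ℝ) (hσ : 0 < σ) (hp : 1 < p) :
    ∃ B : ℝ, ∀ t > 1,
      (2 / (p - 1) - α) * Real.log t
        - sSup (G '' Icc 0 t)
        + (1 / p) * sInf (U '' Icc (σ * t) ((2 + σ) * t))
        - sSup (U '' Icc (σ * t) ((2 + σ) * t)) ≤ B := by
  set C : ℝ := 2 / (p - 1) - α with hC
  have hp0 : (0:ℝ) < p := by linarith
  have hp1 : (0:ℝ) < p - 1 := by linarith
  set M : ℝ := (|C| + 1) * p / (p - 1) with hMdef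
  have hM0 : 0 ≤ M := by positivity
  have hMkey : (1 - 1/p) * M = |C| + 1 := by
    field_simp [hMdef]
    rw [hMdef]; field_simp [hp1.ne']
  clear_value C M
  obtain ⟨a, ha⟩ := eventually_atTop.mp (hlim.eventually_ge_atTop M)
  set ξ₀ : ℝ := max a 2 with hξ₀def
  set T : ℝ := max (ξ₀ / σ) 2 with hTdef
  have hT2 : (2:ℝ) ≤ T := le_max_right _ _
  have hTσ : ξ₀ / σ ≤ T := le_max_left _ _
  have hξ₀a : a ≤ ξ₀ := le_max_left _ _
  have hξ₀2 : (2:ℝ) ≤ ξ₀ := le_max_right _ _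
  clear_value ξ₀ T
  have hσT : Icc σ ((2 + σ) * T) ⊆ Ici 0 := fun x hx => le_trans hσ.le hx.1
  obtain ⟨K, hK⟩ := isCompact_Icc.exists_bound_of_continuousOn (hU.mono hσT)
  refine ⟨max ((|C| + 1) * |Real.log σ|) (|C| * Real.log T + (1/p) * K + K), ?_⟩
  intro t ht
  have ht0 : (0:ℝ) < t := by linarith
  have hσt : (0:ℝ) < σ * t := by positivity
  have hle : σ * t ≤ (2 + σ) * t := by nlinarith
  have hlogt : 0 < Real.log t := Real.log_pos ht
  -- facts about G
  have hGsub : Icc (0:ℝ) t ⊆ Ici 0 := fun x hx => hx.1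
  have hGcomp : IsCompact (G '' Icc 0 t) :=
    isCompact_Icc.image_of_continuousOn (hG.mono hGsub)
  have hGsup : 0 ≤ sSup (G '' Icc 0 t) := by
    have hmem : G 0 ∈ G '' Icc 0 t := ⟨0, ⟨le_refl 0, ht0.le⟩, rfl⟩
    calc (0:ℝ) = G 0 := hG0.symm
      _ ≤ _ := le_csSup hGcomp.bddAbove hmem
  -- facts about U
  have hUsub : Icc (σ * t) ((2 + σ) * t) ⊆ Ici 0 := fun x hx => le_trans hσt.le hx.1
  have hUcomp : IsCompact (U '' Icc (σ * t) ((2 + σ) * t)) :=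
    isCompact_Icc.image_of_continuousOn (hU.mono hUsub)
  have hUne : (U '' Icc (σ * t) ((2 + σ) * t)).Nonempty :=
    (nonempty_Icc.mpr hle).image _
  obtain ⟨ξ, hξmem, hξeq⟩ := hUcomp.sInf_mem hUne
  set m : ℝ := sInf (U '' Icc (σ * t) ((2 + σ) * t)) with hm
  set S : ℝ := sSup (U '' Icc (σ * t) ((2 + σ) * t)) with hS
  have hmS : m ≤ S := csInf_le_csSup hUne hUcomp.bddBelow hUcomp.bddAbove
  clear_value m S
  have hξ1 : σ * t ≤ ξ := hξmem.1
  have hξ2 : ξ ≤ (2 + σ) * t := hξmem.2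
  by_cases hcase : ξ₀ ≤ σ * t
  · -- large t : use superlogarithmic growth
    have haξ : a ≤ ξ := le_trans (le_trans hξ₀a hcase) hξ1
    have h2ξ : (2:ℝ) ≤ ξ := le_trans (le_trans hξ₀2 hcase) hξ1
    have hlogξ : 0 < Real.log ξ := Real.log_pos (by linarith)
    have hUξ : M * Real.log ξ ≤ U ξ := by
      have := ha ξ haξ
      rwa [le_div_iff₀ hlogξ] at this
    have hlog1 : Real.log (σ * t) ≤ Real.log ξ :=
      Real.log_le_log hσt hξ1
    have hm_lb : M * (Real.log σ + Real.log t) ≤ m := by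
      rw [← Real.log_mul (ne_of_gt hσ) (ne_of_gt ht0)]
      calc M * Real.log (σ * t) ≤ M * Real.log ξ :=
            mul_le_mul_of_nonneg_left hlog1 hM0
        _ ≤ U ξ := hUξ
        _ = m := hξeq
    have hq : 0 ≤ 1 - 1/p := by
      have : 1/p < 1 := by
        rw [div_lt_one hp0]; linarith
      linarith
    have h2 : (1 - 1/p) * (M * (Real.log σ + Real.log t)) ≤ (1 - 1/p) * m :=
      mul_le_mul_of_nonneg_left hm_lb hq
    have h3 : (1 - 1/p) * (M * (Real.log σ + Real.log t))
        = (|C| + 1) * (Real.log σ + Real.log t) := by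
      rw [← mul_assoc, hMkey]
    rw [h3] at h2
    have h4 : (1/p) * m - S ≤ -((1 - 1/p) * m) := by
      have : 0 < 1/p := by positivity
      nlinarith [mul_le_mul_of_nonneg_left hmS this.le]
    have habsσ : -|Real.log σ| ≤ Real.log σ := neg_abs_le _
    have hCabs : C ≤ |C| := le_abs_self C
    have e1 : C * Real.log t - sSup (G '' Icc 0 t) + (1/p) * m - S
        ≤ C * Real.log t - (|C| + 1) * (Real.log σ + Real.log t) := by linarith
    have e2 : C * Real.log t - (|C| + 1) * (Real.log σ + Real.log t)
        ≤ (|C| + 1) * |Real.log σ| := by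
      linarith [mul_nonneg (show (0:ℝ) ≤ |C| + 1 - C by linarith) hlogt.le,
        mul_nonneg (show (0:ℝ) ≤ |C| + 1 by positivity)
          (show (0:ℝ) ≤ Real.log σ + |Real.log σ| by linarith)]
    have hfin := e1.trans e2
    exact le_trans hfin (le_max_left _ _)
  · -- small t : use compactness bound
    push_neg at hcase
    have htT : t ≤ T := by
      have h1 : t < ξ₀ / σ := by
        rw [lt_div_iff₀ hσ]; linarith [hcase]
      exact le_trans h1.le hTσ
    have hξin : ξ ∈ Icc σ ((2 + σ) * T) := by
      have e1 : σ * 1 ≤ σ * t := mul_le_mul_of_nonneg_left ht.le hσ.le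
      have e2 : (2 + σ) * t ≤ (2 + σ) * T :=
        mul_le_mul_of_nonneg_left htT (by linarith)
      constructor
      · calc σ = σ * 1 := (mul_one σ).symm
          _ ≤ σ * t := e1
          _ ≤ ξ := hξ1
      · linarith
    have hKξ : |U ξ| ≤ K := by
      have := hK ξ hξin
      rwa [Real.norm_eq_abs] at this
    have hmK : |m| ≤ K := by rw [← hξeq]; exact hKξ
    have habs := abs_le.mp hmK
    have hlogT : Real.log t ≤ Real.log T := Real.log_le_log ht0 htT
    have hlogT0 : 0 < Real.log T := Real.log_pos (by linarith)
    have hCabs : C ≤ |C| := le_abs_self C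
    have hC0 : 0 ≤ |C| := abs_nonneg C
    have hpinv : 0 < 1/p := by positivity
    have h5 : (1/p) * m ≤ (1/p) * K :=
      mul_le_mul_of_nonneg_left habs.2 hpinv.le
    have hfin : C * Real.log t - sSup (G '' Icc 0 t) + (1/p) * m - S
        ≤ |C| * Real.log T + (1/p) * K + K := by
      linarith [mul_nonneg (show (0:ℝ) ≤ |C| - C by linarith) hlogt.le,
        mul_nonneg hC0 (show (0:ℝ) ≤ Real.log T - Real.log t by linarith)]
    exact le_trans hfin (le_max_right _ _)
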